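/- Let G be a totally disconnected locally compact group and φ : G → G a continuous endomorphism. If U ⊆ V are open compact subgroups of G, then H_top(φ,V) ≤ H_top(φ,U). -/

import Mathlib

open Filter Topology

variable {G : Type*} [Group G]

/-- The `i`-th iterate `φ^i` of an endomorphism `φ`. -/
def iterHom (φ : G →* G) : ℕ → (G →* G)
  | 0 => MonoidHom.id G
  | n + 1 => φ.comp (iterHom φ n)

/-- The `n`-th `φ`-cotrajectory `Cₙ(φ,U) = ⋂_{i<n} φ^{-i}(U)` for an endomorphism `φ`. -/
def cotrajNE (φ : G →* G) (U : Subgroup G) (n : ℕ) : Subgroup G :=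
  ⨅ i ∈ Finset.range n, Subgroup.comap (iterHom φ i) U

/-- The topological entropy of `φ` with respect to `U`,
`H_top(φ,U) = lim_n log [U : Cₙ(φ,U)] / n` (the limit exists, so it equals the `limsup`). -/
noncomputable def HtopE (φ : G →* G) (U : Subgroup G) : ℝ :=
  limsup (fun n : ℕ => Real.log ((cotrajNE φ U n).relIndex U) / n) atTop

lemma mem_cotrajNE {φ : G →* G} {U : Subgroup G} {n : ℕ} {x : G} :
    x ∈ cotrajNE φ U n ↔ ∀ i < n, iterHom φ i x ∈ U := by
  simp [cotrajNE, Subgroup.mem_iInf]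

lemma iterHom_succ_apply (φ : G →* G) (n : ℕ) (x : G) :
    iterHom φ (n + 1) x = iterHom φ n (φ x) := by
  induction n with
  | zero => rfl
  | succ n ih =>
      show φ (iterHom φ (n + 1) x) = φ (iterHom φ n (φ x))
      rw [ih]

lemma cotrajNE_zero (φ : G →* G) (U : Subgroup G) : cotrajNE φ U 0 = ⊤ := by
  simp [cotrajNE]

lemma cotrajNE_one (φ : G →* G) (U : Subgroup G) : cotrajNE φ U 1 = U := by
  ext x
  simp [mem_cotrajNE, Nat.lt_one_iff]
  exact ⟨fun h => h, fun h => h⟩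

lemma cotrajNE_succ (φ : G →* G) (U : Subgroup G) (n : ℕ) :
    cotrajNE φ U (n + 1) = U ⊓ (cotrajNE φ U n).comap φ := by
  ext x
  simp only [Subgroup.mem_inf, Subgroup.mem_comap, mem_cotrajNE]
  constructor
  · intro h
    refine ⟨h 0 n.succ_pos, fun i hi => ?_⟩
    rw [← iterHom_succ_apply]
    exact h (i + 1) (Nat.succ_lt_succ hi)
  · rintro ⟨h0, h⟩ i hi
    cases i with
    | zero => exact h0
    | succ i =>
        rw [iterHom_succ_apply]
        exact h i (Nat.lt_of_succ_lt_succ hi)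

lemma cotrajNE_anti (φ : G →* G) (U : Subgroup G) (n : ℕ) :
    cotrajNE φ U (n + 1) ≤ cotrajNE φ U n := fun x hx =>
  mem_cotrajNE.mpr fun i hi => mem_cotrajNE.mp hx i (hi.trans n.lt_succ_self)

lemma cotrajNE_le (φ : G →* G) (U : Subgroup G) (n : ℕ) :
    cotrajNE φ U (n + 1) ≤ U := by
  rw [cotrajNE_succ]; exact inf_le_left

lemma cotrajNE_mono {φ : G →* G} {U V : Subgroup G} (hUV : U ≤ V) (n : ℕ) :
    cotrajNE φ U n ≤ cotrajNE φ V n := fun x hx =>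
  mem_cotrajNE.mpr fun i hi => hUV (mem_cotrajNE.mp hx i hi)

lemma cotrajNE_succ' (φ : G →* G) (U : Subgroup G) (n : ℕ) :
    cotrajNE φ U (n + 1) ⊓ (cotrajNE φ U (n + 1)).comap φ = cotrajNE φ U (n + 2) := by
  ext x
  simp only [Subgroup.mem_inf, Subgroup.mem_comap, mem_cotrajNE]
  constructor
  · rintro ⟨h1, h2⟩ i hi
    cases i with
    | zero => exact h1 0 n.succ_pos
    | succ i =>
        rw [iterHom_succ_apply]
        exact h2 i (Nat.lt_of_succ_lt_succ hi)
  · intro h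
    refine ⟨fun i hi => h i (hi.trans (Nat.lt_succ_self _)), fun i hi => ?_⟩
    rw [← iterHom_succ_apply]
    exact h (i + 1) (Nat.succ_lt_succ hi)

section Top

variable [TopologicalSpace G] [IsTopologicalGroup G]

lemma isOpen_cotrajNE {φ : G →* G} (hφ : Continuous φ) {U : Subgroup G}
    (hUo : IsOpen (U : Set G)) (n : ℕ) : IsOpen ((cotrajNE φ U n : Subgroup G) : Set G) := by
  induction n with
  | zero => rw [cotrajNE_zero]; simp
  | succ n ih =>
      rw [cotrajNE_succ, Subgroup.coe_inf, Subgroup.coe_comap]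
      exact hUo.inter (ih.preimage hφ)

lemma isCompact_cotrajNE {φ : G →* G} (hφ : Continuous φ) {U : Subgroup G}
    (hUo : IsOpen (U : Set G)) (hUc : IsCompact (U : Set G)) (n : ℕ) :
    IsCompact ((cotrajNE φ U (n + 1) : Subgroup G) : Set G) :=
  hUc.of_isClosed_subset ((cotrajNE φ U (n + 1)).isClosed_of_isOpen (isOpen_cotrajNE hφ hUo _))
    (cotrajNE_le φ U n)

lemma relindex_ne_zero_aux {H K : Subgroup G} (hHo : IsOpen (H : Set G))
    (hKc : IsCompact (K : Set G)) : H.relIndex K ≠ 0 := by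
  have : CompactSpace K := isCompact_iff_compactSpace.mp hKc
  have hopen : IsOpen ((H.subgroupOf K : Subgroup K) : Set K) := by
    rw [Subgroup.subgroupOf, Subgroup.coe_comap, Subgroup.coe_subtype]
    exact hHo.preimage continuous_subtype_val
  have := Subgroup.quotient_finite_of_isOpen (H.subgroupOf K) hopen
  exact Subgroup.index_ne_zero_of_finite

end Top

section Main

variable [TopologicalSpace G] [IsTopologicalGroup G]
variable {φ : G →* G} {U : Subgroup G}

lemma s_anti (hφ : Continuous φ) (hUo : IsOpen (U : Set G)) (hUc : IsCompact (U : Set G))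
    (n : ℕ) :
    (cotrajNE φ U (n + 3)).relIndex (cotrajNE φ U (n + 2)) ≤
      (cotrajNE φ U (n + 2)).relIndex (cotrajNE φ U (n + 1)) := by
  have h1 : cotrajNE φ U (n + 3) = (cotrajNE φ U (n + 2)).comap φ ⊓ cotrajNE φ U (n + 2) := by
    rw [inf_comm, cotrajNE_succ' φ U (n + 1)]
  rw [h1, Subgroup.inf_relIndex_right, Subgroup.relIndex_comap]
  refine Subgroup.relIndex_le_of_le_right ?_
    (relindex_ne_zero_aux (isOpen_cotrajNE hφ hUo _) (isCompact_cotrajNE hφ hUo hUc n))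
  rintro _ ⟨x, hx, rfl⟩
  have hx' : x ∈ U ⊓ (cotrajNE φ U (n + 1)).comap φ := by
    rw [← cotrajNE_succ]; exact hx
  exact hx'.2

lemma s_le (hφ : Continuous φ) (hUo : IsOpen (U : Set G)) (hUc : IsCompact (U : Set G))
    (n : ℕ) :
    (cotrajNE φ U (n + 2)).relIndex (cotrajNE φ U (n + 1)) ≤
      (cotrajNE φ U 2).relIndex (cotrajNE φ U 1) := by
  induction n with
  | zero => exact le_refl _
  | succ n ih => exact le_trans (s_anti hφ hUo hUc n) ih

lemma t_le (hφ : Continuous φ) (hUo : IsOpen (U : Set G)) (hUc : IsCompact (U : Set G))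
    (n : ℕ) :
    (cotrajNE φ U (n + 1)).relIndex U ≤
      ((cotrajNE φ U 2).relIndex (cotrajNE φ U 1)) ^ n := by
  induction n with
  | zero => rw [cotrajNE_one]; simp [Subgroup.relIndex_self]
  | succ n ih =>
      have hm : (cotrajNE φ U (n + 2)).relIndex (cotrajNE φ U (n + 1)) *
          (cotrajNE φ U (n + 1)).relIndex U = (cotrajNE φ U (n + 2)).relIndex U :=
        Subgroup.relIndex_mul_relIndex _ _ _ (cotrajNE_anti φ U (n + 1)) (cotrajNE_le φ U n)
      rw [← hm, pow_succ']
      exact Nat.mul_le_mul (s_le hφ hUo hUc n) ih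

lemma fU_bound (hφ : Continuous φ) (hUo : IsOpen (U : Set G)) (hUc : IsCompact (U : Set G))
    (n : ℕ) :
    Real.log ((cotrajNE φ U n).relIndex U) / n ≤
      Real.log ((cotrajNE φ U 2).relIndex (cotrajNE φ U 1)) := by
  have hs1ne : (cotrajNE φ U 2).relIndex (cotrajNE φ U 1) ≠ 0 :=
    relindex_ne_zero_aux (isOpen_cotrajNE hφ hUo 2) (isCompact_cotrajNE hφ hUo hUc 0)
  have hs1 : (1 : ℝ) ≤ ((cotrajNE φ U 2).relIndex (cotrajNE φ U 1) : ℝ) := by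
    exact_mod_cast Nat.one_le_iff_ne_zero.mpr hs1ne
  have hlog : 0 ≤ Real.log ((cotrajNE φ U 2).relIndex (cotrajNE φ U 1)) := Real.log_nonneg hs1
  cases n with
  | zero => simpa using hlog
  | succ n =>
      have ht : 0 < ((cotrajNE φ U (n + 1)).relIndex U : ℝ) := by
        have := relindex_ne_zero_aux (isOpen_cotrajNE hφ hUo (n + 1)) hUc
        exact_mod_cast Nat.pos_of_ne_zero this
      have h1 : Real.log ((cotrajNE φ U (n + 1)).relIndex U) ≤
          n * Real.log ((cotrajNE φ U 2).relIndex (cotrajNE φ U 1)) := by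
        calc Real.log ((cotrajNE φ U (n + 1)).relIndex U)
            ≤ Real.log (((((cotrajNE φ U 2).relIndex (cotrajNE φ U 1)) ^ n : ℕ) : ℝ)) :=
              Real.log_le_log ht (by exact_mod_cast t_le hφ hUo hUc n)
          _ = n * Real.log ((cotrajNE φ U 2).relIndex (cotrajNE φ U 1)) := by
              push_cast
              rw [Real.log_pow]
      have hn1 : (0 : ℝ) < ((n + 1 : ℕ) : ℝ) := by positivity
      refine le_trans ((div_le_div_iff_of_pos_right hn1).mpr h1) ?_
      rw [div_le_iff₀ hn1]
      push_cast
      nlinarith [hlog]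

end Main

theorem Htop_antitone [TopologicalSpace G] [IsTopologicalGroup G]
    [LocallyCompactSpace G] [TotallyDisconnectedSpace G]
    (φ : G →* G) (hφ : Continuous φ)
    (U V : Subgroup G) (hUo : IsOpen (U : Set G)) (hUc : IsCompact (U : Set G))
    (hVo : IsOpen (V : Set G)) (hVc : IsCompact (V : Set G)) (hUV : U ≤ V) :
    HtopE φ V ≤ HtopE φ U := by
  have hfUbdd : IsBoundedUnder (· ≤ ·) atTop
      (fun n : ℕ => Real.log ((cotrajNE φ U n).relIndex U) / n) :=
    ⟨Real.log ((cotrajNE φ U 2).relIndex (cotrajNE φ U 1)),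
      Filter.eventually_map.mpr (Filter.Eventually.of_forall (fU_bound hφ hUo hUc))⟩
  set c := Real.log (U.relIndex V) with hcdef
  have hc0 : U.relIndex V ≠ 0 := relindex_ne_zero_aux hUo hVc
  have key : ∀ n : ℕ, Real.log ((cotrajNE φ V n).relIndex V) / n ≤
      Real.log ((cotrajNE φ U n).relIndex U) / n + c / n := by
    intro n
    cases n with
    | zero => simp
    | succ n =>
        have hUVn : (cotrajNE φ U (n + 1)).relIndex V ≠ 0 :=
          relindex_ne_zero_aux (isOpen_cotrajNE hφ hUo _) hVc
        have hVn : (cotrajNE φ V (n + 1)).relIndex V ≠ 0 :=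
          relindex_ne_zero_aux (isOpen_cotrajNE hφ hVo _) hVc
        have hUn : (cotrajNE φ U (n + 1)).relIndex U ≠ 0 :=
          relindex_ne_zero_aux (isOpen_cotrajNE hφ hUo _) hUc
        have h1 : (cotrajNE φ V (n + 1)).relIndex V ≤ (cotrajNE φ U (n + 1)).relIndex V :=
          Subgroup.relIndex_le_of_le_left (cotrajNE_mono hUV _) hUVn
        have h2 : (cotrajNE φ U (n + 1)).relIndex U * U.relIndex V
            = (cotrajNE φ U (n + 1)).relIndex V :=
          Subgroup.relIndex_mul_relIndex _ _ _ (cotrajNE_le φ U n) hUV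
        have hpos : 0 < ((cotrajNE φ V (n + 1)).relIndex V : ℝ) := by
          exact_mod_cast Nat.pos_of_ne_zero hVn
        have hlog : Real.log ((cotrajNE φ V (n + 1)).relIndex V) ≤
            Real.log ((cotrajNE φ U (n + 1)).relIndex U) + c := by
          calc Real.log ((cotrajNE φ V (n + 1)).relIndex V)
              ≤ Real.log ((cotrajNE φ U (n + 1)).relIndex V) :=
                Real.log_le_log hpos (by exact_mod_cast h1)
            _ = Real.log (((cotrajNE φ U (n + 1)).relIndex U : ℝ) * (U.relIndex V : ℝ)) := by
                rw [← h2]; push_cast; ring_nf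
            _ = _ := Real.log_mul (by exact_mod_cast hUn) (by exact_mod_cast hc0)
        have hn1 : (0 : ℝ) < ((n + 1 : ℕ) : ℝ) := by positivity
        rw [← add_div]
        exact (div_le_div_iff_of_pos_right hn1).mpr hlog
  refine le_of_forall_pos_le_add fun ε hε => ?_
  have hL : limsup (fun n : ℕ => Real.log ((cotrajNE φ U n).relIndex U) / n) atTop
      < HtopE φ U + ε / 2 := by
    rw [HtopE]; linarith
  have h1 : ∀ᶠ n in atTop,
      Real.log ((cotrajNE φ U n).relIndex U) / n < HtopE φ U + ε / 2 :=
    eventually_lt_of_limsup_lt hL hfUbdd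
  have h2 : ∀ᶠ n : ℕ in atTop, c / n < ε / 2 :=
    (tendsto_const_div_atTop_nhds_zero_nat c).eventually_lt_const (by linarith)
  have h3 : ∀ᶠ n : ℕ in atTop,
      Real.log ((cotrajNE φ V n).relIndex V) / n ≤ HtopE φ U + ε := by
    filter_upwards [h1, h2] with n hn1 hn2
    exact le_trans (key n) (by linarith)
  rw [HtopE]
  refine limsup_le_of_le ?_ h3
  exact isCoboundedUnder_le_of_eventually_le atTop (x := 0)
    (Filter.Eventually.of_forall fun n =>
      div_nonneg (Real.log_natCast_nonneg _) (Nat.cast_nonneg n))
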